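/- arXiv:1207.3755 — 3 statements merged into one kernel-verified Lean document; each statement's English description precedes it below -/
import Mathlib

section
/- For n ≥ 2, the number b_{n,1,r,ℓ} of ascent sequences of length n avoiding 0012, not ending in 0, with exactly 1 ascent, exactly r zeros, and fwd value ℓ equals 1 if r + ℓ = n (with 1 ≤ r, ℓ ≤ n−1) and equals 0 otherwise. -/
/-- Number of ascents of a sequence of non-negative integers:
indices `j` with `x j < x (j+1)`. -/
def ascents (l : List ℕ) : ℕ :=
  ((l.zip l.tail).filter (fun p => p.1 < p.2)).length

/-- `x` is an ascent sequence: it starts with 0 and each subsequent letter is at most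
one more than the number of ascents of the preceding prefix. -/
def IsAscentSeq (x : List ℕ) : Prop :=
  (∀ h : 0 < x.length, x.get ⟨0, h⟩ = 0) ∧
  ∀ i : Fin x.length, 0 < (i : ℕ) → x.get i ≤ ascents (x.take (i : ℕ)) + 1

/-- `p` contains the pattern `t`: `p` has a subsequence order-isomorphic to `t`. -/
def Contains (p t : List ℕ) : Prop :=
  ∃ f : Fin t.length → Fin p.length, StrictMono f ∧
    ∀ i j : Fin t.length, t.get i < t.get j ↔ p.get (f i) < p.get (f j)

/-- `p` avoids the pattern `t`. -/
def Avoids (p t : List ℕ) : Prop := ¬ Contains p t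

/-- `fwd x` is the length of the maximal final weakly decreasing
run of consecutive letters at the end of `x`. -/
def fwd (x : List ℕ) : ℕ :=
  Nat.findGreatest
    (fun k => (x.drop (x.length - k)).IsChain (fun a b => b ≤ a)) x.length

/-- `bseq n m r ℓ` is the number of ascent sequences of length `n` avoiding `0012`,
not ending in the letter `0`, with exactly `m` ascents, exactly `r` zeros, and
`fwd` value `ℓ`. -/
noncomputable def bseq (n m r ℓ : ℕ) : ℕ :=
  {x : List ℕ | x.length = n ∧ IsAscentSeq x ∧ Avoids x [0, 0, 1, 2] ∧
    x.getLast? ≠ some 0 ∧ ascents x = m ∧ x.count 0 = r ∧ fwd x = ℓ}.ncard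


lemma ascents_cons_cons (a b : ℕ) (t : List ℕ) :
    ascents (a :: b :: t) = (if a < b then 1 else 0) + ascents (b :: t) := by
  simp only [ascents, List.tail_cons, List.zip_cons_cons]
  rw [List.filter_cons]
  split <;> rename_i h <;> simp_all <;> omega

lemma ascents_eq_zero_iff (l : List ℕ) :
    ascents l = 0 ↔ ∀ i, i + 1 < l.length → ¬ l.getD i 0 < l.getD (i+1) 0 := by
  induction l with
  | nil => simp [ascents]
  | cons a t ih =>
    cases t with
    | nil => simp [ascents]
    | cons b t =>
      rw [ascents_cons_cons]
      constructor
      · intro h i hi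
        have h1 : ¬ a < b := by by_contra hab; simp [hab] at h
        have h2 := (ih.mp (by omega))
        match i with
        | 0 => simpa using h1
        | (i+1) =>
          simp only [List.getD_cons_succ]
          exact h2 i (by simpa using hi)
      · intro h
        have h1 : ¬ a < b := by have := h 0 (by simp); simpa using this
        have h2 : ascents (b :: t) = 0 := by
          apply ih.mpr
          intro i hi
          have := h (i+1) (by simpa using hi)
          simpa using this
        simp [h1, h2]

lemma ascents_eq_one (l : List ℕ) (h : ascents l = 1) :
    ∃ j, j + 1 < l.length ∧ l.getD j 0 < l.getD (j+1) 0 ∧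
      ∀ i, i ≠ j → i + 1 < l.length → ¬ l.getD i 0 < l.getD (i+1) 0 := by
  induction l with
  | nil => simp [ascents] at h
  | cons a t ih =>
    cases t with
    | nil => simp [ascents] at h
    | cons b t =>
      rw [ascents_cons_cons] at h
      by_cases hab : a < b
      · simp only [hab, if_true] at h
        have h0 : ascents (b :: t) = 0 := by omega
        refine ⟨0, by simp, by simpa using hab, ?_⟩
        intro i hi hlen
        match i with
        | 0 => omega
        | (i+1) =>
          simp only [List.getD_cons_succ]
          exact (ascents_eq_zero_iff _).mp h0 i (by simpa using hlen)
      · simp only [hab, if_false] at h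
        obtain ⟨j, hj1, hj2, hj3⟩ := ih (by omega)
        refine ⟨j+1, by simpa using hj1, by simpa using hj2, ?_⟩
        intro i hi hlen
        match i with
        | 0 => simpa using hab
        | (i+1) =>
          simp only [List.getD_cons_succ]
          exact hj3 i (by omega) (by simpa using hlen)

lemma getD_take (l : List ℕ) (k i : ℕ) (h : i < (l.take k).length) :
    (l.take k).getD i 0 = l.getD i 0 := by
  rw [List.getD_eq_getElem _ _ h, List.getElem_take, List.getD_eq_getElem]

lemma structure_lemma (x : List ℕ) (hx : IsAscentSeq x) (ha : ascents x = 1)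
    (hl : x.getLast? ≠ some 0) :
    ∃ r ℓ, 1 ≤ r ∧ 1 ≤ ℓ ∧ r + ℓ = x.length ∧
      x = List.replicate r 0 ++ List.replicate ℓ 1 := by
  obtain ⟨j, hj1, hj2, hj3⟩ := ascents_eq_one x ha
  have hlen : j + 1 < x.length := hj1
  -- all entries up to j are 0
  have h0 : ∀ i, i ≤ j → x.getD i 0 = 0 := by
    intro i
    induction i with
    | zero =>
      intro _
      have := hx.1 (by omega)
      rw [List.getD_eq_getElem _ _ (by omega)]
      simpa [List.get_eq_getElem] using this
    | succ i ih =>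
      intro hij
      have hprev : x.getD i 0 = 0 := ih (by omega)
      have := hj3 i (by omega) (by omega)
      omega
  -- the value after the ascent is 1
  have h1 : x.getD (j+1) 0 = 1 := by
    have hge : 1 ≤ x.getD (j+1) 0 := by
      have := h0 j le_rfl; omega
    have htake : ascents (x.take (j+1)) = 0 := by
      rw [ascents_eq_zero_iff]
      intro i hi
      have hlt : i + 1 < j + 1 := lt_of_lt_of_le hi (by rw [List.length_take]; omega)
      rw [getD_take _ _ _ (by omega), getD_take _ _ _ (by omega)]
      exact hj3 i (by omega) (by omega)
    have hle := hx.2 ⟨j+1, hlen⟩ (by simp)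
    rw [List.get_eq_getElem] at hle
    simp only at hle
    rw [htake] at hle
    rw [List.getD_eq_getElem _ _ hlen] at hge ⊢
    omega
  -- entries cannot revive after hitting zero past j
  have hzero_after : ∀ m, x.getD m 0 = 0 → ∀ k, m ≤ k → k + 1 ≤ x.length →
      j < m → x.getD k 0 = 0 := by
    intro m hm k
    induction k with
    | zero => intro h1 _ h3; omega
    | succ k ih =>
      intro hmk hk hjm
      rcases Nat.lt_or_ge k (m) with hkm | hkm
      · have : m = k + 1 := by omega
        rw [← this]; exact hm
      · have hk' : x.getD k 0 = 0 := ih (by omega) (by omega) hjm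
        have := hj3 k (by omega) (by omega)
        omega
  -- all entries after j are 1
  have h2 : ∀ i, j < i → i < x.length → x.getD i 0 = 1 := by
    have key : ∀ d, j + 1 + d < x.length → x.getD (j+1+d) 0 = 1 := by
      intro d
      induction d with
      | zero => intro _; simpa using h1
      | succ d ih =>
        intro hd
        rw [show j+1+(d+1) = j+1+d+1 from by omega]
        have hprev : x.getD (j+1+d) 0 = 1 := ih (by omega)
        have hna := hj3 (j+1+d) (by omega) (by omega)
        have hle : x.getD (j+1+d+1) 0 ≤ 1 := by omega
        rcases Nat.lt_or_ge (x.getD (j+1+d+1) 0) 1 with hlt | hge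
        · exfalso
          have hzero : x.getD (j+1+d+1) 0 = 0 := by omega
          have hlast : x.getD (x.length - 1) 0 = 0 :=
            hzero_after (j+1+d+1) hzero (x.length - 1) (by omega) (by omega) (by omega)
          apply hl
          rw [List.getLast?_eq_getElem?, List.getElem?_eq_getElem (by omega)]
          rw [List.getD_eq_getElem _ _ (by omega)] at hlast
          rw [hlast]
        · omega
    intro i hji hi
    have : i = j + 1 + (i - j - 1) := by omega
    rw [this]
    exact key _ (by omega)
  refine ⟨j+1, x.length - (j+1), by omega, by omega, by omega, ?_⟩
  apply List.ext_getElem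
  · simp; omega
  · intro i hi hi2
    rcases Nat.lt_or_ge i (j+1) with hij | hij
    · rw [List.getElem_append_left (by simpa using hij)]
      have := h0 i (by omega)
      rw [List.getD_eq_getElem _ _ hi] at this
      simpa using this
    · rw [List.getElem_append_right (by simpa using hij)]
      have := h2 i (by omega) hi
      rw [List.getD_eq_getElem _ _ hi] at this
      simpa using this

lemma ascents_replicate_one (ℓ : ℕ) : ascents (List.replicate ℓ 1) = 0 := by
  induction ℓ with
  | zero => rfl
  | succ ℓ ih =>
    cases ℓ with
    | zero => rfl
    | succ m =>
      rw [List.replicate_succ, List.replicate_succ]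
      rw [ascents_cons_cons]
      rw [← List.replicate_succ, ih]
      simp

lemma ascents_w (r ℓ : ℕ) (hr : 1 ≤ r) (hℓ : 1 ≤ ℓ) :
    ascents (List.replicate r 0 ++ List.replicate ℓ 1) = 1 := by
  induction r with
  | zero => omega
  | succ r ih =>
    cases r with
    | zero =>
      rw [show (0:ℕ)+1 = 1 by rfl, List.replicate_one, List.singleton_append]
      obtain ⟨m, rfl⟩ : ∃ m, ℓ = m + 1 := ⟨ℓ - 1, by omega⟩
      rw [List.replicate_succ, ascents_cons_cons, ← List.replicate_succ,
        ascents_replicate_one]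
      simp
    | succ m =>
      rw [List.replicate_succ, List.replicate_succ]
      simp only [List.cons_append]
      rw [ascents_cons_cons]
      rw [← List.cons_append, ← List.replicate_succ]
      rw [ih (by omega)]
      simp

lemma mem_w_le_one (r ℓ : ℕ) (a : ℕ)
    (h : a ∈ List.replicate r 0 ++ List.replicate ℓ 1) : a ≤ 1 := by
  rw [List.mem_append] at h
  rcases h with h | h <;> rw [List.eq_of_mem_replicate h] <;> omega

lemma isAscentSeq_w (r ℓ : ℕ) (hr : 1 ≤ r) :
    IsAscentSeq (List.replicate r 0 ++ List.replicate ℓ 1) := by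
  constructor
  · intro h
    rw [List.get_eq_getElem, List.getElem_append_left (by simp; omega)]
    simp [hr]
  · intro i _
    have : (List.replicate r 0 ++ List.replicate ℓ 1).get i ≤ 1 :=
      mem_w_le_one r ℓ _ (List.get_mem _ _)
    omega

lemma avoids_w (r ℓ : ℕ) : Avoids (List.replicate r 0 ++ List.replicate ℓ 1) [0,0,1,2] := by
  rintro ⟨f, hf, hiso⟩
  have h4 : ([0,0,1,2] : List ℕ).length = 4 := rfl
  have h02 := (hiso (⟨0, by omega⟩) (⟨2, by omega⟩)).mp (by simp [List.get])
  have h23 := (hiso (⟨2, by omega⟩) (⟨3, by omega⟩)).mp (by simp [List.get])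
  have hb : (List.replicate r 0 ++ List.replicate ℓ 1).get (f ⟨3, by omega⟩) ≤ 1 :=
    mem_w_le_one r ℓ _ (List.get_mem _ _)
  omega

lemma getLast_w (r ℓ : ℕ) (hℓ : 1 ≤ ℓ) :
    (List.replicate r 0 ++ List.replicate ℓ 1).getLast? = some 1 := by
  obtain ⟨m, rfl⟩ : ∃ m, ℓ = m + 1 := ⟨ℓ - 1, by omega⟩
  rw [List.replicate_succ']
  rw [← List.append_assoc]
  exact List.getLast?_concat

lemma count_w (r ℓ : ℕ) : (List.replicate r 0 ++ List.replicate ℓ 1).count 0 = r := by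
  simp [List.count_replicate]

lemma fwd_w (r ℓ : ℕ) (hr : 1 ≤ r) (hℓ : 1 ≤ ℓ) :
    fwd (List.replicate r 0 ++ List.replicate ℓ 1) = ℓ := by
  have hlen : (List.replicate r 0 ++ List.replicate ℓ 1).length = r + ℓ := by simp
  rw [fwd, hlen]
  rw [Nat.findGreatest_eq_iff]
  refine ⟨by omega, ?_, ?_⟩
  · intro _
    have : r + ℓ - ℓ = r := by omega
    rw [this]
    rw [List.drop_append_of_le_length (by simp)]
    simp only [List.drop_replicate, Nat.sub_self, List.replicate_zero, List.nil_append]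
    exact List.isChain_replicate_of_rel ℓ (le_refl 1)
  · intro k hk hk2 hch
    have hd : r + ℓ - k < r := by omega
    rw [List.drop_append_of_le_length (by simp only [List.length_replicate]; omega)] at hch
    rw [List.drop_replicate] at hch
    have := hch.drop (r - (r + ℓ - k) - 1)
    rw [List.drop_append_of_le_length (by simp only [List.length_replicate]; omega), List.drop_replicate] at this
    have h1 : r - (r + ℓ - k) - (r - (r + ℓ - k) - 1) = 1 := by omega
    rw [h1] at this
    obtain ⟨m, rfl⟩ : ∃ m, ℓ = m + 1 := ⟨ℓ - 1, by omega⟩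
    rw [List.replicate_one, List.replicate_succ] at this
    simp only [List.singleton_append, List.isChain_cons_cons] at this
    omega

/-- For `n ≥ 2`, `b_{n,1,r,ℓ}` equals `1` if `r + ℓ = n` with `1 ≤ r, ℓ ≤ n-1`,
and `0` otherwise. -/
theorem bseq_one_ascent (n r ℓ : ℕ) (hn : 2 ≤ n) :
    bseq n 1 r ℓ = if r + ℓ = n ∧ 1 ≤ r ∧ 1 ≤ ℓ then 1 else 0 := by
  classical
  have hset : {x : List ℕ | x.length = n ∧ IsAscentSeq x ∧ Avoids x [0, 0, 1, 2] ∧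
      x.getLast? ≠ some 0 ∧ ascents x = 1 ∧ x.count 0 = r ∧ fwd x = ℓ} =
      if r + ℓ = n ∧ 1 ≤ r ∧ 1 ≤ ℓ
        then {List.replicate r 0 ++ List.replicate ℓ 1} else ∅ := by
    ext x
    simp only [Set.mem_setOf_eq]
    constructor
    · rintro ⟨hxl, hxa, hxv, hxg, hx1, hxc, hxf⟩
      obtain ⟨r', ℓ', hr', hℓ', hsum, rfl⟩ := structure_lemma x hxa hx1 hxg
      have hc : r' = r := by rw [count_w] at hxc; exact hxc
      have hf : ℓ' = ℓ := by rw [fwd_w r' ℓ' hr' hℓ'] at hxf; exact hxf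
      have hn' : r' + ℓ' = n := hsum.trans hxl
      have hcond : r + ℓ = n ∧ 1 ≤ r ∧ 1 ≤ ℓ := by omega
      rw [if_pos hcond]
      simp only [Set.mem_singleton_iff]
      rw [← hc, ← hf]
    · intro hx
      by_cases hcond : r + ℓ = n ∧ 1 ≤ r ∧ 1 ≤ ℓ
      · rw [if_pos hcond] at hx
        simp only [Set.mem_singleton_iff] at hx
        subst hx
        obtain ⟨hsum, hr, hℓ⟩ := hcond
        refine ⟨by simpa using hsum, isAscentSeq_w r ℓ hr, avoids_w r ℓ, ?_,
          ascents_w r ℓ hr hℓ, count_w r ℓ, fwd_w r ℓ hr hℓ⟩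
        rw [getLast_w r ℓ hℓ]
        simp
      · rw [if_neg hcond] at hx
        exact absurd hx (Set.notMem_empty _)
  rw [bseq, hset]
  by_cases hcond : r + ℓ = n ∧ 1 ≤ r ∧ 1 ≤ ℓ
  · rw [if_pos hcond, if_pos hcond, Set.ncard_singleton]
  · rw [if_neg hcond, if_neg hcond, Set.ncard_empty]
end

section
/- For n ≥ 3 and m ≥ 2, the numbers b_{n,m,r,ℓ} satisfy b_{n,m,1,ℓ} = Σ_{i=1}^{n−m} Σ_{j=0}^{t} b_{n−j−1, m−1, i−j, ℓ−j}, where t = min{i−1, ℓ−1}. -/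
-- ===================== auxiliary development =====================

/-- recursive version of ascents -/
def ascR : List ℕ → ℕ
  | a :: b :: t => (if a < b then 1 else 0) + ascR (b :: t)
  | _ => 0

lemma ascents_nil : ascents [] = 0 := rfl
lemma ascents_single (a : ℕ) : ascents [a] = 0 := rfl

lemma ascents_eq_ascR (l : List ℕ) : ascents l = ascR l := by
  match l with
  | [] => rfl
  | [a] => rfl
  | a :: b :: t =>
    rw [ascents_cons_cons, ascR, ascents_eq_ascR (b :: t)]

lemma ascR_le_length (l : List ℕ) : ascR l ≤ l.length := by
  match l with
  | [] => simp [ascR]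
  | [a] => simp [ascR]
  | a :: b :: t =>
    have := ascR_le_length (b :: t)
    rw [ascR]
    simp only [List.length_cons] at *
    split <;> omega

/-- longest weakly increasing (≤) prefix run length -/
def frun : List ℕ → ℕ
  | [] => 0
  | [_] => 1
  | a :: b :: t => if a ≤ b then frun (b :: t) + 1 else 1

lemma frun_le_length (l : List ℕ) : frun l ≤ l.length := by
  match l with
  | [] => simp [frun]
  | [a] => simp [frun]
  | a :: b :: t =>
    have := frun_le_length (b :: t)
    rw [frun]; simp only [List.length_cons] at *; split <;> omega

lemma frun_pos (l : List ℕ) (h : l ≠ []) : 1 ≤ frun l := by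
  match l with
  | [a] => simp [frun]
  | a :: b :: t => rw [frun]; split <;> omega

lemma chain'_take_frun (l : List ℕ) : (l.take (frun l)).IsChain (· ≤ ·) := by
  match l with
  | [] => simp [frun]
  | [a] => simp [frun]
  | a :: b :: t =>
    rw [frun]
    split
    · rename_i h
      rw [List.take_succ_cons]
      have ht := chain'_take_frun (b :: t)
      rw [List.isChain_cons]
      obtain ⟨f', hf'⟩ : ∃ f', frun (b :: t) = f' + 1 :=
        ⟨frun (b :: t) - 1, by have := frun_pos (b :: t) (by simp); omega⟩
      refine ⟨?_, ht⟩
      intro y hy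
      rw [hf', List.take_succ_cons] at hy
      simp at hy; omega
    · simp [List.take_succ_cons]

lemma le_frun_of_chain' (l : List ℕ) (k : ℕ) (hk : k ≤ l.length)
    (hc : (l.take k).IsChain (· ≤ ·)) : k ≤ frun l := by
  match l with
  | [] => simp at hk; simp [frun, hk]
  | [a] => simpa [frun] using hk
  | a :: b :: t =>
    match k with
    | 0 => omega
    | 1 => have := frun_pos (a :: b :: t) (by simp); omega
    | (k+2) =>
      rw [List.take_succ_cons, List.take_succ_cons, List.isChain_cons_cons] at hc
      rw [frun]
      have : k + 1 ≤ frun (b :: t) := by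
        apply le_frun_of_chain' (b :: t) (k+1)
        · simp at hk ⊢; omega
        · rw [List.take_succ_cons]; exact hc.2
      simp [hc.1]; omega

lemma fwd_eq_frun_reverse (l : List ℕ) : fwd l = frun l.reverse := by
  rw [fwd, Nat.findGreatest_eq_iff]
  have hP : ∀ k, k ≤ l.length →
      ((l.drop (l.length - k)).IsChain (fun a b => b ≤ a) ↔
        (l.reverse.take k).IsChain (· ≤ ·)) := by
    intro k hk
    have h1 : l.drop (l.length - k) = (l.reverse.take k).reverse := by
      apply List.reverse_injective
      rw [List.reverse_reverse, List.reverse_drop]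
      congr 1
      omega
    rw [h1, List.isChain_reverse]
  refine ⟨?_, ?_, ?_⟩
  · have := frun_le_length l.reverse; simpa using this
  · intro _
    rw [hP _ (by have := frun_le_length l.reverse; simpa using this)]
    exact chain'_take_frun l.reverse
  · intro k hk1 hk2 hc
    rw [hP _ hk2] at hc
    have := le_frun_of_chain' l.reverse k (by simpa using hk2) hc
    omega

-- L1: appending a "breaking" element at the end doesn't change frun
lemma frun_append_single (t : List ℕ) (a b : ℕ) (ht : t.getLast? = some b)
    (hb : ¬ b ≤ a) : frun (t ++ [a]) = frun t := by
  match t with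
  | [] => simp at ht
  | [x] =>
    simp at ht
    subst ht
    simp [frun, hb]
  | x :: y :: t' =>
    rw [List.getLast?_cons_cons] at ht
    have IH := frun_append_single (y :: t') a b ht hb
    show frun (x :: y :: (t' ++ [a])) = _
    rw [frun, frun]
    rw [show y :: (t' ++ [a]) = (y :: t') ++ [a] from rfl, IH]

lemma frun_cons_of_le (a b : ℕ) (t : List ℕ) (h : a ≤ b) :
    frun (a :: b :: t) = frun (b :: t) + 1 := by
  rw [frun]; simp [h]

-- L2: prepending replicate of 1s when head ≥ 1
lemma frun_replicate_append (j : ℕ) (s : List ℕ) (c : ℕ) (hs : s.head? = some c)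
    (hc : 1 ≤ c) : frun (List.replicate j 1 ++ s) = j + frun s := by
  induction j with
  | zero => simp
  | succ j IH =>
    rw [List.replicate_succ, List.cons_append]
    cases j with
    | zero =>
      cases s with
      | nil => simp at hs
      | cons b s' =>
        simp at hs
        subst hs
        simp only [List.replicate, List.nil_append]
        rw [frun_cons_of_le 1 b s' hc]
        omega
    | succ j' =>
      rw [List.replicate_succ, List.cons_append] at IH ⊢
      rw [frun_cons_of_le 1 1 _ (le_refl 1)]
      omega

lemma frun_map_succ (l : List ℕ) : frun (l.map Nat.succ) = frun l := by
  match l with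
  | [] => rfl
  | [a] => rfl
  | a :: b :: t =>
    have IH := frun_map_succ (b :: t)
    rw [List.map_cons] at IH
    show frun (Nat.succ a :: Nat.succ b :: _) = _
    rw [frun, frun, IH]
    simp [Nat.succ_le_succ_iff]

lemma ascR_map_succ (l : List ℕ) : ascR (l.map Nat.succ) = ascR l := by
  match l with
  | [] => rfl
  | [a] => rfl
  | a :: b :: t =>
    have IH := ascR_map_succ (b :: t)
    rw [List.map_cons] at IH
    show ascR (Nat.succ a :: Nat.succ b :: _) = _
    rw [ascR, ascR, IH]
    simp [Nat.succ_lt_succ_iff]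

lemma ascR_one_cons_replicate (j : ℕ) : ascR (1 :: List.replicate j 1) = 0 := by
  induction j with
  | zero => rfl
  | succ j IH =>
    rw [List.replicate_succ, ascR, IH]
    simp

lemma ascR_append_replicate_one (l : List ℕ) (j : ℕ) (b : ℕ)
    (hl : l.getLast? = some b) (hb : 1 ≤ b) :
    ascR (l ++ List.replicate j 1) = ascR l := by
  match l with
  | [] => simp at hl
  | [x] =>
    simp at hl; subst hl
    match j with
    | 0 => simp
    | j+1 =>
      rw [List.replicate_succ]
      show ascR (x :: 1 :: List.replicate j 1) = ascR [x]
      rw [ascR, ascR_one_cons_replicate]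
      have : ¬ x < 1 := by omega
      simp [this, ascR]
  | x :: y :: t' =>
    rw [List.getLast?_cons_cons] at hl
    have IH := ascR_append_replicate_one (y :: t') j b hl hb
    show ascR (x :: y :: (t' ++ _)) = _
    rw [ascR, ascR]
    rw [show y :: (t' ++ List.replicate j 1) = (y :: t') ++ List.replicate j 1 from rfl, IH]

lemma ascR_zero_cons (c : ℕ) (t : List ℕ) (hc : 1 ≤ c) :
    ascR (0 :: c :: t) = 1 + ascR (c :: t) := by
  have h0 : 0 < c := hc
  rw [ascR]; simp [h0]

-- zeros + ascents bound
lemma count_zero_add_ascR_le (l : List ℕ) (hl : l ≠ []) :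
    l.count 0 + ascR l ≤ l.length - (if l.head hl = 0 then 0 else 1) := by
  match l with
  | [x] =>
    by_cases hx : x = 0 <;> simp [hx, ascR, List.count_singleton]
  | x :: y :: t =>
    have IH := count_zero_add_ascR_le (y :: t) (by simp)
    rw [ascR]
    simp only [List.head_cons] at IH ⊢
    rw [List.count_cons]
    by_cases hx : x = 0
    · subst hx
      by_cases hy : y = 0
      · simp [hy] at IH ⊢
        have : ¬ (0:ℕ) < 0 := by omega
        simp [this]
        omega
      · simp [hy] at IH ⊢
        split <;> omega
    · by_cases hy : y = 0
      · subst hy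
        simp [hx] at IH ⊢
        have : ¬ x < 0 := by omega
        simp [this]
        omega
      · simp [hx, hy] at IH ⊢
        split <;> omega

/-- pattern 0012 in index/value form -/
def Pat0012 (p : List ℕ) : Prop :=
  ∃ a b c d va vc vd : ℕ, a < b ∧ b < c ∧ c < d ∧
    p[a]? = some va ∧ p[b]? = some va ∧ p[c]? = some vc ∧ p[d]? = some vd ∧
    va < vc ∧ vc < vd

lemma contains0012_iff (p : List ℕ) : Contains p [0, 0, 1, 2] ↔ Pat0012 p := by
  constructor
  · rintro ⟨f, hmono, hiso⟩
    have l4 : ([0,0,1,2] : List ℕ).length = 4 := rfl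
    set i0 : Fin ([0,0,1,2] : List ℕ).length := ⟨0, by simp⟩
    set i1 : Fin ([0,0,1,2] : List ℕ).length := ⟨1, by simp⟩
    set i2 : Fin ([0,0,1,2] : List ℕ).length := ⟨2, by simp⟩
    set i3 : Fin ([0,0,1,2] : List ℕ).length := ⟨3, by simp⟩
    have h01 : ¬ p.get (f i0) < p.get (f i1) := by
      rw [← hiso i0 i1]; decide
    have h10 : ¬ p.get (f i1) < p.get (f i0) := by
      rw [← hiso i1 i0]; decide
    have h12 : p.get (f i1) < p.get (f i2) := by
      rw [← hiso i1 i2]; decide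
    have h23 : p.get (f i2) < p.get (f i3) := by
      rw [← hiso i2 i3]; decide
    refine ⟨f i0, f i1, f i2, f i3, p.get (f i1), p.get (f i2), p.get (f i3),
      hmono (show i0 < i1 by decide),
      hmono (show i1 < i2 by decide),
      hmono (show i2 < i3 by decide), ?_, ?_, ?_, ?_, h12, h23⟩
    · rw [List.getElem?_eq_getElem (f i0).isLt]
      have : p.get (f i0) = p.get (f i1) := Nat.le_antisymm (by omega) (by omega)
      rw [← List.get_eq_getElem, this]
    · rw [List.getElem?_eq_getElem (f i1).isLt, ← List.get_eq_getElem]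
    · rw [List.getElem?_eq_getElem (f i2).isLt, ← List.get_eq_getElem]
    · rw [List.getElem?_eq_getElem (f i3).isLt, ← List.get_eq_getElem]
  · rintro ⟨a, b, c, d, va, vc, vd, hab, hbc, hcd, ha, hb, hc, hd, h1, h2⟩
    rw [List.getElem?_eq_some_iff] at ha hb hc hd
    obtain ⟨hal, hav⟩ := ha
    obtain ⟨hbl, hbv⟩ := hb
    obtain ⟨hcl, hcv⟩ := hc
    obtain ⟨hdl, hdv⟩ := hd
    refine ⟨fun i => if i.val = 0 then ⟨a, hal⟩ else if i.val = 1 then ⟨b, hbl⟩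
      else if i.val = 2 then ⟨c, hcl⟩ else ⟨d, hdl⟩, ?_, ?_⟩
    · intro i j hij
      have hi4 : i.val < 4 := i.isLt
      have hj4 : j.val < 4 := j.isLt
      rw [Fin.lt_def] at hij ⊢
      dsimp only
      split_ifs <;> simp_all <;> omega
    · intro i j
      have hi4 : i.val < 4 := i.isLt
      have hj4 : j.val < 4 := j.isLt
      have hgt : ∀ k : Fin ([0,0,1,2] : List ℕ).length,
          ([0,0,1,2] : List ℕ).get k = if k.val = 0 then 0 else if k.val = 1 then 0
            else if k.val = 2 then 1 else 2 := by
        decide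
      rw [hgt i, hgt j]
      dsimp only
      split_ifs <;> simp only [List.get_eq_getElem] <;>
        first
          | (rw [hav, hbv]; omega)
          | omega


/-- the gluing map -/
def G (j : ℕ) (z : List ℕ) : List ℕ := 0 :: (z.map Nat.succ ++ List.replicate j 1)

/-- trailing ones count -/
def T (x : List ℕ) : ℕ := (x.reverse.takeWhile (fun v => v == 1)).length

lemma mem_y {z : List ℕ} {j : ℕ} :
    ∀ v ∈ z.map Nat.succ ++ List.replicate j 1, 1 ≤ v := by
  intro v hv
  rcases List.mem_append.1 hv with h | h
  · obtain ⟨u, _, rfl⟩ := List.mem_map.1 h; omega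
  · rw [List.eq_of_mem_replicate h]

lemma length_G (j : ℕ) (z : List ℕ) : (G j z).length = z.length + j + 1 := by
  simp [G]

lemma yval_lt {z : List ℕ} {j k : ℕ} (hk : k < z.length) :
    (z.map Nat.succ ++ List.replicate j 1)[k]? = Option.map Nat.succ z[k]? := by
  rw [List.getElem?_append]
  simp [hk]

lemma yval_ge {z : List ℕ} {j k : ℕ} (hk : z.length ≤ k) :
    (z.map Nat.succ ++ List.replicate j 1)[k]? = (List.replicate j 1)[k - z.length]? := by
  rw [List.getElem?_append_right (by simpa using hk)]
  simp

lemma getLast?_map_succ_of_ne_nil {z : List ℕ} (hz : z ≠ []) :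
    ∃ b, (z.map Nat.succ).getLast? = some b ∧ 1 ≤ b := by
  have hw : z.map Nat.succ ≠ [] := by simpa using hz
  refine ⟨(z.map Nat.succ).getLast hw, List.getLast?_eq_getLast hw, ?_⟩
  have := List.getLast_mem hw
  obtain ⟨u, -, hequ⟩ := List.mem_map.1 this
  omega

lemma ascR_G {z : List ℕ} (j : ℕ) (hz : z ≠ []) : ascR (G j z) = ascR z + 1 := by
  obtain ⟨zh, zt, rfl⟩ : ∃ zh zt, z = zh :: zt := by
    cases z with
    | nil => exact absurd rfl hz
    | cons a t => exact ⟨a, t, rfl⟩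
  obtain ⟨b, hb, hb1⟩ := getLast?_map_succ_of_ne_nil hz
  have h1 : ascR (G j (zh :: zt)) = ascR (0 :: (zh :: zt).map Nat.succ) := by
    show ascR ((0 :: (zh :: zt).map Nat.succ) ++ List.replicate j 1) = _
    apply ascR_append_replicate_one _ _ b _ hb1
    rw [List.map_cons] at hb ⊢
    rw [List.getLast?_cons_cons]
    exact hb
  rw [h1, List.map_cons, ascR_zero_cons zh.succ _ (by omega), ← List.map_cons,
    ascR_map_succ]
  omega

lemma fwd_frun_G {z : List ℕ} (j : ℕ) (hz : z ≠ []) :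
    frun (G j z).reverse = frun z.reverse + j := by
  have hrev : z.reverse ≠ [] := by simpa using hz
  obtain ⟨v, t, hvt⟩ : ∃ v t, z.reverse = v :: t := by
    cases h : z.reverse with
    | nil => exact absurd h hrev
    | cons a t => exact ⟨a, t, rfl⟩
  have hG : (G j z).reverse
      = List.replicate j 1 ++ (List.map Nat.succ z.reverse ++ [0]) := by
    rw [G, List.reverse_cons, List.reverse_append, List.reverse_replicate,
      List.map_reverse, List.append_assoc]
  rw [hG]
  rw [frun_replicate_append j _ (Nat.succ v) (by rw [hvt]; simp) (by omega)]
  obtain ⟨b, hb, hb1⟩ := getLast?_map_succ_of_ne_nil hrev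
  rw [frun_append_single _ 0 b hb (by omega), frun_map_succ]
  omega

lemma count_zero_G (j : ℕ) (z : List ℕ) : (G j z).count 0 = 1 := by
  have h : (z.map Nat.succ ++ List.replicate j 1).count 0 = 0 := by
    rw [List.count_eq_zero]
    intro h
    exact absurd (mem_y 0 h) (by omega)
  rw [G]
  simp [List.count_cons, h]

lemma count_one_G (j : ℕ) (z : List ℕ) : (G j z).count 1 = z.count 0 + j := by
  rw [G, List.count_cons]
  simp only [List.count_append]
  have h1 : (z.map Nat.succ).count 1 = z.count 0 := by
    have := List.count_map_of_injective z Nat.succ Nat.succ_injective 0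
    simpa using this
  have h2 : (List.replicate j 1).count 1 = j := by simp
  simp [h1, h2]

lemma getLast?_G {z : List ℕ} (j : ℕ) (hz : z ≠ []) : (G j z).getLast? ≠ some 0 := by
  have hy : z.map Nat.succ ++ List.replicate j 1 ≠ [] := by simp [hz]
  obtain ⟨c, t, hct⟩ : ∃ c t, z.map Nat.succ ++ List.replicate j 1 = c :: t := by
    cases h : z.map Nat.succ ++ List.replicate j 1 with
    | nil => exact absurd h hy
    | cons a t => exact ⟨a, t, rfl⟩
  rw [G, hct, List.getLast?_cons_cons]
  intro hcontra
  rw [List.getLast?_eq_getLast (by simp)] at hcontra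
  have h0 : (c :: t).getLast (by simp) = 0 := Option.some.inj hcontra
  have : (0:ℕ) ∈ c :: t := h0 ▸ List.getLast_mem (by simp)
  rw [← hct] at this
  exact absurd (mem_y 0 this) (by omega)

lemma takeWhile_replicate_append (p : ℕ → Bool) (j : ℕ) (a : ℕ) (ha : p a = true)
    (s : List ℕ) :
    (List.replicate j a ++ s).takeWhile p = List.replicate j a ++ s.takeWhile p := by
  induction j with
  | zero => simp
  | succ j IH =>
    rw [List.replicate_succ, List.cons_append, List.takeWhile_cons_of_pos ha, IH]
    simp [List.replicate_succ]

lemma T_G {z : List ℕ} (j : ℕ) {v : ℕ} (hvl : z.getLast? = some v) (hv : 1 ≤ v) :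
    T (G j z) = j := by
  have hrev : z.reverse.head? = some v := by rw [List.head?_reverse]; exact hvl
  obtain ⟨t, ht⟩ : ∃ t, z.reverse = v :: t := by
    cases h : z.reverse with
    | nil => rw [h] at hrev; simp at hrev
    | cons a t => rw [h] at hrev; simp at hrev; exact ⟨t, by rw [hrev]⟩
  have hG : (G j z).reverse
      = List.replicate j 1 ++ (Nat.succ v :: (List.map Nat.succ t ++ [0])) := by
    rw [G, List.reverse_cons, List.reverse_append, List.reverse_replicate,
      ← List.map_reverse, List.append_assoc, ht, List.map_cons, List.cons_append]
  rw [T, hG, takeWhile_replicate_append _ _ _ (by simp),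
    List.takeWhile_cons_of_neg (by simp; omega)]
  simp

lemma pat_G_iff (z : List ℕ) (j : ℕ) : Pat0012 (G j z) ↔ Pat0012 z := by
  constructor
  · rintro ⟨a, b, c, d, va, vc, vd, hab, hbc, hcd, ha, hb, hc, hd, h1, h2⟩
    -- a cannot be 0
    obtain ⟨a', rfl⟩ : ∃ a', a = a' + 1 := by
      rcases Nat.eq_zero_or_pos a with rfl | hpos
      · exfalso
        have hva : va = 0 := by
          rw [G] at ha
          simp at ha
          omega
        obtain ⟨b', rfl⟩ : ∃ b', b = b' + 1 := ⟨b - 1, by omega⟩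
        rw [G, List.getElem?_cons_succ] at hb
        rw [List.getElem?_eq_some_iff] at hb
        obtain ⟨hbl, hbv⟩ := hb
        have := mem_y _ (hbv ▸ List.getElem_mem hbl)
        omega
      · exact ⟨a - 1, by omega⟩
    obtain ⟨b', rfl⟩ : ∃ b', b = b' + 1 := ⟨b - 1, by omega⟩
    obtain ⟨c', rfl⟩ : ∃ c', c = c' + 1 := ⟨c - 1, by omega⟩
    obtain ⟨d', rfl⟩ : ∃ d', d = d' + 1 := ⟨d - 1, by omega⟩
    rw [G, List.getElem?_cons_succ] at ha hb hc hd
    -- d' must be < z.length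
    have hdlt : d' < z.length := by
      by_contra hge
      push_neg at hge
      rw [yval_ge hge] at hd
      have hvd : vd = 1 := by
        rw [List.getElem?_replicate] at hd
        split at hd
        · exact (Option.some.inj hd).symm
        · simp at hd
      have hvc0 : vc = 0 := by omega
      rw [List.getElem?_eq_some_iff] at hc
      obtain ⟨hcl, hcv⟩ := hc
      have := mem_y _ (hcv ▸ List.getElem_mem hcl)
      omega
    have hclt : c' < z.length := by omega
    have hblt : b' < z.length := by omega
    have halt : a' < z.length := by omega
    rw [yval_lt halt] at ha
    rw [yval_lt hblt] at hb
    rw [yval_lt hclt] at hc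
    rw [yval_lt hdlt] at hd
    obtain ⟨ua, hua, hua2⟩ := Option.map_eq_some_iff.1 ha
    obtain ⟨ub, hub, hub2⟩ := Option.map_eq_some_iff.1 hb
    obtain ⟨uc, huc, huc2⟩ := Option.map_eq_some_iff.1 hc
    obtain ⟨ud, hud, hud2⟩ := Option.map_eq_some_iff.1 hd
    refine ⟨a', b', c', d', ua, uc, ud, by omega, by omega, by omega,
      hua, ?_, huc, hud, by omega, by omega⟩
    have : ua = ub := by omega
    rw [this]; exact hub
  · rintro ⟨a, b, c, d, va, vc, vd, hab, hbc, hcd, ha, hb, hc, hd, h1, h2⟩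
    have hal : a < z.length := (List.getElem?_eq_some_iff.1 ha).1
    have hbl : b < z.length := (List.getElem?_eq_some_iff.1 hb).1
    have hcl : c < z.length := (List.getElem?_eq_some_iff.1 hc).1
    have hdl : d < z.length := (List.getElem?_eq_some_iff.1 hd).1
    refine ⟨a + 1, b + 1, c + 1, d + 1, va + 1, vc + 1, vd + 1,
      by omega, by omega, by omega, ?_, ?_, ?_, ?_, by omega, by omega⟩ <;>
    · rw [G, List.getElem?_cons_succ, yval_lt (by omega)]
      first
        | (rw [ha]; rfl)
        | (rw [hb]; rfl)
        | (rw [hc]; rfl)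
        | (rw [hd]; rfl)

lemma G_get_succ_lt {z : List ℕ} {j k : ℕ} (hk : k < z.length)
    (h : k + 1 < (G j z).length) :
    (G j z)[k + 1] = z[k] + 1 := by
  simp only [G, List.getElem_cons_succ]
  rw [List.getElem_append_left (by simpa using hk), List.getElem_map]

lemma G_get_succ_ge {z : List ℕ} {j k : ℕ} (hk : z.length ≤ k)
    (h : k + 1 < (G j z).length) :
    (G j z)[k + 1] = 1 := by
  simp only [G, List.getElem_cons_succ]
  rw [List.getElem_append_right (by simpa using hk), List.getElem_replicate]

lemma G_take_succ {z : List ℕ} {j k : ℕ} (hk : k ≤ z.length) :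
    (G j z).take (k + 1) = 0 :: (z.take k).map Nat.succ := by
  show (0 :: (z.map Nat.succ ++ List.replicate j 1)).take (k+1) = _
  rw [List.take_succ_cons, List.take_append_of_le_length (by simpa using hk),
    ← List.map_take]

lemma ascents_G_take {z : List ℕ} {j k : ℕ} (hk1 : 1 ≤ k) (hk : k ≤ z.length) :
    ascents ((G j z).take (k + 1)) = ascents (z.take k) + 1 := by
  rw [G_take_succ hk, ascents_eq_ascR, ascents_eq_ascR]
  obtain ⟨z0, zt, rfl⟩ : ∃ z0 zt, z = z0 :: zt := by
    cases z with
    | nil => simp at hk; omega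
    | cons a t => exact ⟨a, t, rfl⟩
  obtain ⟨k', rfl⟩ : ∃ k', k = k' + 1 := ⟨k - 1, by omega⟩
  rw [List.take_succ_cons, List.map_cons,
    ascR_zero_cons z0.succ _ (by omega), ← List.map_cons, ascR_map_succ]
  omega

lemma isAscentSeq_G {z : List ℕ} (j : ℕ) (hz : z ≠ []) :
    IsAscentSeq (G j z) ↔ IsAscentSeq z := by
  have hzlen : 0 < z.length := List.length_pos_iff.2 hz
  constructor
  · rintro ⟨h0, hcond⟩
    have hz0 : z[0] = 0 := by
      have h1 : 1 < (G j z).length := by simp [G]; omega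
      have := hcond ⟨1, h1⟩ (by simp)
      rw [List.get_eq_getElem] at this
      simp only at this
      rw [G_get_succ_lt hzlen h1] at this
      have ht : (G j z).take 1 = [0] := by
        rw [show (1 : ℕ) = 0 + 1 from rfl, G_take_succ (by omega)]
        simp
      rw [ht] at this
      have : z[0] + 1 ≤ ascents [0] + 1 := this
      have ha : ascents [0] = 0 := rfl
      omega
    refine ⟨fun h => by rw [List.get_eq_getElem]; exact hz0, ?_⟩
    rintro ⟨k, hk⟩ hpos
    have hposk : 0 < k := hpos
    simp only [List.get_eq_getElem]
    obtain ⟨k', rfl⟩ : ∃ k', k = k' + 1 := ⟨k - 1, by omega⟩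
    have hG : k' + 1 + 1 < (G j z).length := by simp [G] at *; omega
    have := hcond ⟨k' + 1 + 1, hG⟩ (by simp)
    rw [List.get_eq_getElem] at this
    simp only at this
    rw [G_get_succ_lt (by omega) hG, ascents_G_take (by omega) (by omega)] at this
    omega
  · rintro ⟨h0, hcond⟩
    have hz0 : z[0] = 0 := by
      have := h0 hzlen
      rwa [List.get_eq_getElem] at this
    refine ⟨fun h => by rw [List.get_eq_getElem]; rfl, ?_⟩
    rintro ⟨k, hk⟩ hpos
    have hposk : 0 < k := hpos
    simp only [List.get_eq_getElem]
    obtain ⟨k', rfl⟩ : ∃ k', k = k' + 1 := ⟨k - 1, by omega⟩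
    rcases Nat.lt_or_ge k' z.length with hlt | hge
    · rcases Nat.eq_zero_or_pos k' with rfl | hk'pos
      · rw [G_get_succ_lt hzlen hk, hz0]
        have ht : (G j z).take 1 = [0] := by
          rw [show (1 : ℕ) = 0 + 1 from rfl, G_take_succ (by omega)]
          simp
        rw [show (0:ℕ) + 1 = 1 from rfl, ht]
        have ha : ascents [0] = 0 := rfl
        omega
      · rw [G_get_succ_lt hlt hk, ascents_G_take hk'pos (by omega)]
        have := hcond ⟨k', by omega⟩ hk'pos
        rw [List.get_eq_getElem] at this
        simp only at this
        omega
    · rw [G_get_succ_ge hge hk]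
      omega

/-- decomposition: any list starting with 0, with no other zeros, length ≥ 3,
and at least 2 ascents, is `G j z` for suitable `j`, `z`. -/
lemma decomp {x : List ℕ} (hlen : 3 ≤ x.length)
    (hhead : x.head? = some 0)
    (hcount : x.count 0 = 1) (hasc : 2 ≤ ascR x) :
    ∃ j z v, z ≠ [] ∧ z.getLast? = some v ∧ 1 ≤ v ∧ x = G j z := by
  obtain ⟨x0, y, rfl⟩ : ∃ x0 y, x = x0 :: y := by
    cases x with
    | nil => simp at hhead
    | cons a t => exact ⟨a, t, rfl⟩
  have hx0 : x0 = 0 := by simpa using hhead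
  subst hx0
  have hcy : y.count 0 = 0 := by
    rw [List.count_cons] at hcount
    simpa using hcount
  have hy1 : ∀ v ∈ y, 1 ≤ v := by
    intro v hv
    rcases Nat.eq_zero_or_pos v with rfl | h
    · rw [List.count_eq_zero] at hcy; exact absurd hv hcy
    · exact h
  obtain ⟨j, hj⟩ : ∃ j, (y.reverse.takeWhile (fun v => v == 1)).length = j := ⟨_, rfl⟩
  obtain ⟨s, hs⟩ : ∃ s, y.reverse.dropWhile (fun v => v == 1) = s := ⟨_, rfl⟩
  have htw : y.reverse.takeWhile (fun v => v == 1) = List.replicate j 1 := by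
    rw [List.eq_replicate_iff]
    exact ⟨hj, fun b hb => by simpa using List.mem_takeWhile_imp hb⟩
  have hy : y = s.reverse ++ List.replicate j 1 := by
    have h1 : List.replicate j 1 ++ s = y.reverse := by
      rw [← htw, ← hs]; exact List.takeWhile_append_dropWhile
    have h2 : y = y.reverse.reverse := by rw [List.reverse_reverse]
    rw [h2, ← h1, List.reverse_append, List.reverse_replicate]
  have hsne : s ≠ [] := by
    intro hnil
    rw [hnil] at hy
    simp only [List.reverse_nil, List.nil_append] at hy
    -- then x = 0 :: replicate j 1, contradicting 2 ≤ ascR x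
    rw [hy] at hasc hlen
    simp only [List.length_cons, List.length_replicate] at hlen
    obtain ⟨j', rfl⟩ : ∃ j', j = j' + 1 := ⟨j - 1, by omega⟩
    rw [List.replicate_succ] at hasc
    rw [show ascR (0 :: 1 :: List.replicate j' 1)
        = (if (0:ℕ) < 1 then 1 else 0) + ascR (1 :: List.replicate j' 1) from rfl,
      ascR_one_cons_replicate] at hasc
    simp at hasc
  obtain ⟨c, s', hcs⟩ : ∃ c s', s = c :: s' := by
    cases s with
    | nil => exact absurd rfl hsne
    | cons a t => exact ⟨a, t, rfl⟩
  have hcfalse : ¬ (c == 1) = true := by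
    have h0 : 0 < (y.reverse.dropWhile (fun v => v == 1)).length := by
      rw [hs, hcs]; simp
    have hnot := List.dropWhile_get_zero_not (p := fun v => v == 1) y.reverse h0
    have hget : (y.reverse.dropWhile (fun v => v == 1)).get ⟨0, h0⟩ = c := by
      have heq : y.reverse.dropWhile (fun v => v == 1) = c :: s' := by rw [hs, hcs]
      simp [heq]
    rwa [hget] at hnot
  have hc1 : c ≠ 1 := by simpa using hcfalse
  have hcmem : c ∈ y := by
    rw [hy, hcs]
    simp
  have hc2 : 2 ≤ c := by
    have := hy1 c hcmem
    omega
  refine ⟨j, (s.reverse).map (fun v => v - 1), c - 1, ?_, ?_, by omega, ?_⟩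
  · simp [hcs]
  · rw [List.map_reverse, List.getLast?_reverse, hcs]
    simp
  · rw [G, hy]
    congr 1
    rw [List.map_map]
    congr 1
    have : ∀ v ∈ s.reverse, (Nat.succ ∘ fun v => v - 1) v = id v := by
      intro v hv
      have : v ∈ y := by rw [hy]; exact List.mem_append.2 (Or.inl hv)
      have := hy1 v this
      simp only [Function.comp_apply, id_eq]
      omega
    rw [List.map_congr_left this, List.map_id]

lemma finite_len_bdd (N : ℕ) : ∀ n, {l : List ℕ | l.length = n ∧ ∀ v ∈ l, v < N}.Finite := by
  intro n
  induction n with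
  | zero =>
    apply Set.Finite.subset (Set.finite_singleton ([] : List ℕ))
    rintro l ⟨hl, -⟩
    simp [List.length_eq_zero_iff.1 hl]
  | succ n IH =>
    apply Set.Finite.subset (Set.Finite.image (fun p : ℕ × List ℕ => p.1 :: p.2)
      ((Set.finite_Iio N).prod IH))
    rintro l ⟨hl, hb⟩
    cases l with
    | nil => simp at hl
    | cons a t =>
      refine ⟨(a, t), ⟨?_, ?_, ?_⟩, rfl⟩
      · exact hb a (by simp)
      · simpa using hl
      · exact fun v hv => hb v (by simp [hv])

lemma ncard_partition {α : Type*} (s : Set α) (hs : s.Finite) (g : α → ℕ) (F : Finset ℕ)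
    (hg : ∀ x ∈ s, g x ∈ F) :
    s.ncard = ∑ k ∈ F, (s ∩ {x | g x = k}).ncard := by
  classical
  rw [Set.ncard_eq_toFinset_card s hs, Finset.card_eq_sum_card_fiberwise (f := g) (t := F)
    (fun x hx => hg x (hs.mem_toFinset.1 hx))]
  apply Finset.sum_congr rfl
  intro k _
  rw [← Set.ncard_coe_finset]
  congr 1
  ext a
  simp [Set.mem_inter_iff, hs.mem_toFinset]


-- ===================== final glue =====================

def BS (n m r ℓ : ℕ) : Set (List ℕ) :=
  {x : List ℕ | x.length = n ∧ IsAscentSeq x ∧ Avoids x [0, 0, 1, 2] ∧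
    x.getLast? ≠ some 0 ∧ ascents x = m ∧ x.count 0 = r ∧ fwd x = ℓ}

lemma bseq_eq_ncard (n m r ℓ : ℕ) : bseq n m r ℓ = (BS n m r ℓ).ncard := rfl

lemma elem_bound {x : List ℕ} (hx : IsAscentSeq x) : ∀ v ∈ x, v < x.length + 2 := by
  intro v hv
  obtain ⟨i, hi⟩ := List.mem_iff_get.1 hv
  rcases Nat.eq_zero_or_pos i.val with h0 | hpos
  · have hl : 0 < x.length := by have := i.isLt; omega
    have : i = ⟨0, hl⟩ := Fin.ext h0
    rw [this] at hi
    rw [← hi, hx.1 hl]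
    omega
  · have := hx.2 i hpos
    rw [hi] at this
    have h2 : ascents (x.take i.val) ≤ x.length := by
      rw [ascents_eq_ascR]
      calc ascR (x.take i.val) ≤ (x.take i.val).length := ascR_le_length _
        _ ≤ x.length := by rw [List.length_take]; omega
    omega

lemma finite_BS (n m r ℓ : ℕ) : (BS n m r ℓ).Finite := by
  apply Set.Finite.subset (finite_len_bdd (n + 2) n)
  rintro x ⟨hlen, hasc, -⟩
  refine ⟨hlen, fun v hv => ?_⟩
  have := elem_bound hasc v hv
  omega

lemma G_inj (j : ℕ) : Function.Injective (G j) := by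
  intro z z' h
  rw [G, G] at h
  injection h with h1 h2
  exact List.map_injective_iff.2 Nat.succ_injective (List.append_cancel_right h2)

lemma avoids_G_iff (z : List ℕ) (j : ℕ) :
    Avoids (G j z) [0, 0, 1, 2] ↔ Avoids z [0, 0, 1, 2] := by
  unfold Avoids
  rw [contains0012_iff, contains0012_iff, pat_G_iff]

lemma G_mem {n' m' r' ℓ' : ℕ} {z : List ℕ} (hz : z ∈ BS n' m' r' ℓ') (hr' : 1 ≤ r')
    (j : ℕ) :
    G j z ∈ BS (n' + j + 1) (m' + 1) 1 (ℓ' + j) ∧ (G j z).count 1 = r' + j ∧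
      T (G j z) = j := by
  obtain ⟨hlen, hasc, hav, hlast, hm, hc, hf⟩ := hz
  have hzne : z ≠ [] := by
    intro h
    rw [h] at hc
    simp at hc
    omega
  obtain ⟨v, hvl, hv1⟩ : ∃ v, z.getLast? = some v ∧ 1 ≤ v := by
    refine ⟨z.getLast hzne, List.getLast?_eq_getLast hzne, ?_⟩
    rcases Nat.eq_zero_or_pos (z.getLast hzne) with h0 | h
    · exact absurd (by rw [List.getLast?_eq_getLast hzne, h0]) hlast
    · exact h
  refine ⟨⟨?_, ?_, ?_, ?_, ?_, ?_, ?_⟩, ?_, ?_⟩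
  · rw [length_G, hlen]
  · exact (isAscentSeq_G j hzne).2 hasc
  · exact (avoids_G_iff z j).2 hav
  · exact getLast?_G j hzne
  · rw [ascents_eq_ascR, ascR_G j hzne, ← ascents_eq_ascR, hm]
  · exact count_zero_G j z
  · rw [fwd_eq_frun_reverse (G j z), fwd_frun_G j hzne,
      show frun z.reverse = fwd z from (fwd_eq_frun_reverse z).symm, hf]
  · rw [count_one_G, hc]
  · exact T_G j hvl hv1

lemma mem_decomp {n m ℓ : ℕ} {x : List ℕ} (hn : 3 ≤ n) (hm : 2 ≤ m)
    (hx : x ∈ BS n m 1 ℓ) :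
    ∃ z, x = G (T x) z ∧
      z ∈ BS (n - T x - 1) (m - 1) (x.count 1 - T x) (ℓ - T x) ∧
      T x + 1 ≤ x.count 1 ∧ T x + 1 ≤ ℓ ∧ x.count 1 ≤ n - m := by
  obtain ⟨hlen, hasc, hav, hlast, hm', hc, hf⟩ := hx
  have hxne : x ≠ [] := by intro h; rw [h] at hlen; simp at hlen; omega
  have hhead : x.head? = some 0 := by
    cases x with
    | nil => exact absurd rfl hxne
    | cons a t =>
      have := hasc.1 (by simp)
      simp only [List.get] at this
      rw [this]
      rfl
  obtain ⟨j, z, v, hzne, hvl, hv1, hxG⟩ :=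
    decomp (by omega) hhead hc (by rw [← ascents_eq_ascR, hm']; omega)
  have hT : T x = j := by rw [hxG]; exact T_G j hvl hv1
  -- z statistics
  have hzasc : IsAscentSeq z := (isAscentSeq_G j hzne).1 (hxG ▸ hasc)
  have hzlen : z.length + j + 1 = n := by rw [← hlen, hxG, length_G]
  have hzm : ascents z + 1 = m := by
    rw [← hm', hxG]
    simp only [ascents_eq_ascR]
    rw [ascR_G j hzne]
  have hzc : z.count 0 + j = x.count 1 := by rw [hxG, count_one_G]
  have hzf : fwd z + j = ℓ := by
    rw [← hf, hxG, fwd_eq_frun_reverse (G j z), fwd_frun_G j hzne,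
      show frun z.reverse = fwd z from (fwd_eq_frun_reverse z).symm]
  have hz0 : z[0]'(List.length_pos_iff.2 hzne) = 0 := by
    have := hzasc.1 (List.length_pos_iff.2 hzne)
    rwa [List.get_eq_getElem] at this
  have hzc1 : 1 ≤ z.count 0 := List.count_pos_iff.2 (hz0 ▸ List.getElem_mem _)
  have hzf1 : 1 ≤ fwd z := by
    rw [fwd_eq_frun_reverse]
    exact frun_pos _ (by simpa using hzne)
  have hzhead : z.head hzne = 0 := by
    cases z with
    | nil => exact absurd rfl hzne
    | cons a t => simpa using hz0
  have hbound := count_zero_add_ascR_le z hzne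
  rw [hzhead] at hbound
  simp only [if_pos rfl] at hbound
  rw [← ascents_eq_ascR] at hbound
  refine ⟨z, by rw [hT, ← hxG], ⟨?_, hzasc, (avoids_G_iff z j).1 (hxG ▸ hav), ?_, ?_, ?_, ?_⟩,
    by omega, by omega, by omega⟩
  · omega
  · rw [hvl]; intro h; injection h with h; omega
  · omega
  · omega
  · omega

lemma cell_eq {n m ℓ i j : ℕ} (hn : 3 ≤ n) (hm : 2 ≤ m)
    (hi : i ∈ Finset.Icc 1 (n - m)) (hj : j ∈ Finset.Icc 0 (min (i - 1) (ℓ - 1)))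
    (hℓ : 1 ≤ ℓ) :
    BS n m 1 ℓ ∩ {x | x.count 1 = i} ∩ {x | T x = j}
      = G j '' BS (n - j - 1) (m - 1) (i - j) (ℓ - j) := by
  rw [Finset.mem_Icc] at hi hj
  have hij : j ≤ i - 1 ∧ j ≤ ℓ - 1 := by
    have := hj.2
    omega
  ext x
  constructor
  · rintro ⟨⟨hxB, hxc⟩, hxT⟩
    obtain ⟨z, hxG, hzB, h1, h2, h3⟩ := mem_decomp hn hm hxB
    simp only [Set.mem_setOf_eq] at hxc hxT
    refine ⟨z, ?_, ?_⟩
    · rw [hxT, hxc] at hzB; exact hzB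
    · rw [← hxT]; exact hxG.symm
  · rintro ⟨z, hzB, rfl⟩
    have hiz : 1 ≤ i - j := by omega
    obtain ⟨hmem, hcnt, hT⟩ := G_mem hzB hiz j
    have e1 : n - j - 1 + j + 1 = n := by omega
    have e2 : m - 1 + 1 = m := by omega
    have e3 : ℓ - j + j = ℓ := by omega
    have e4 : i - j + j = i := by omega
    rw [e1, e2, e3] at hmem
    rw [e4] at hcnt
    exact ⟨⟨hmem, hcnt⟩, hT⟩

/-- Recurrence for `b_{n,m,1,ℓ}` when `n ≥ 3` and `m ≥ 2`:
`b_{n,m,1,ℓ} = Σ_{i=1}^{n-m} Σ_{j=0}^{min(i-1,ℓ-1)} b_{n-j-1,m-1,i-j,ℓ-j}`. -/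
theorem bseq_rec_r_eq_one (n m ℓ : ℕ) (hn : 3 ≤ n) (hm : 2 ≤ m) (hℓ : 1 ≤ ℓ) :
    bseq n m 1 ℓ
      = ∑ i ∈ Finset.Icc 1 (n - m), ∑ j ∈ Finset.Icc 0 (min (i - 1) (ℓ - 1)),
          bseq (n - j - 1) (m - 1) (i - j) (ℓ - j) := by
  rw [bseq_eq_ncard]
  rw [ncard_partition (BS n m 1 ℓ) (finite_BS n m 1 ℓ) (List.count 1)
    (Finset.Icc 1 (n - m)) (by
      intro x hx
      obtain ⟨z, -, -, h1, -, h3⟩ := mem_decomp hn hm hx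
      rw [Finset.mem_Icc]
      omega)]
  apply Finset.sum_congr rfl
  intro i hi
  rw [ncard_partition (BS n m 1 ℓ ∩ {x | x.count 1 = i})
    ((finite_BS n m 1 ℓ).subset Set.inter_subset_left) T
    (Finset.Icc 0 (min (i - 1) (ℓ - 1))) (by
      rintro x ⟨hxB, hxc⟩
      obtain ⟨z, -, -, h1, h2, -⟩ := mem_decomp hn hm hxB
      simp only [Set.mem_setOf_eq] at hxc
      rw [Finset.mem_Icc]
      omega)]
  apply Finset.sum_congr rfl
  intro j hj
  rw [show BS n m 1 ℓ ∩ {x | x.count 1 = i} ∩ {x | T x = j}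
    = G j '' BS (n - j - 1) (m - 1) (i - j) (ℓ - j) from cell_eq hn hm hi hj hℓ,
    Set.ncard_image_of_injective _ (G_inj j)]
  rfl
end

section
/- For n ≥ 2 and 2 ≤ t ≤ n, the number a_{n,t,1} of canonical sequential forms of partitions of {1,…,n} that avoid the pattern 12123, have at least two distinct letters, have the leftmost occurrence of the largest letter at position t, and the leftmost occurrence of the second largest letter at position 1, equals 2^{n−t}. -/
/-- `p` is a restricted growth function: a sequence of positive integers starting
with `1` in which each letter exceeds the maximum of the preceding letters by at
most one. -/
def IsRGF (p : List ℕ) : Prop :=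
  (∀ h : 0 < p.length, p.get ⟨0, h⟩ = 1) ∧
  (∀ a ∈ p, 1 ≤ a) ∧
  ∀ i : Fin p.length, 0 < (i : ℕ) → p.get i ≤ (p.take (i : ℕ)).foldr max 0 + 1

/-- The largest letter of a sequence. -/
def maxLetter (p : List ℕ) : ℕ := p.foldr max 0

/-- `aRGF n t s` is the number of RGFs of length `n` avoiding the pattern `12123`,
having at least two distinct letters, in which the leftmost occurrence of the
largest letter is at (1-indexed) position `t` and the leftmost occurrence of the
second largest letter is at position `s`.  (For an RGF with largest letter `M`
having at least two distinct letters, the second largest letter is `M - 1`.) -/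
noncomputable def aRGF (n t s : ℕ) : ℕ :=
  {p : List ℕ | p.length = n ∧ IsRGF p ∧ Avoids p [1, 2, 1, 2, 3] ∧
    2 ≤ p.toFinset.card ∧
    p.idxOf (maxLetter p) + 1 = t ∧ p.idxOf (maxLetter p - 1) + 1 = s}.ncard

/- ### auxiliary lemmas -/

lemma le_foldr_max {l : List ℕ} {a : ℕ} (h : a ∈ l) : a ≤ l.foldr max 0 := by
  induction l with
  | nil => simp at h
  | cons b t ih =>
    rcases List.mem_cons.1 h with h | h
    · simp [h]
    · exact le_trans (ih h) (le_max_right _ _)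

lemma foldr_max_le {l : List ℕ} {m : ℕ} (h : ∀ a ∈ l, a ≤ m) : l.foldr max 0 ≤ m := by
  induction l with
  | nil => simp
  | cons b t ih =>
    simp only [List.foldr_cons, max_le_iff]
    exact ⟨h b (by simp), ih fun a ha => h a (by simp [ha])⟩

lemma foldr_max_mem {l : List ℕ} (h : 0 < l.foldr max 0) : l.foldr max 0 ∈ l := by
  induction l with
  | nil => simp at h
  | cons b t ih =>
    simp only [List.foldr_cons] at h ⊢
    rcases le_total (t.foldr max 0) b with hb | hb
    · rw [max_eq_left hb]; exact List.mem_cons_self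
    · rw [max_eq_right hb] at h ⊢; exact List.mem_cons_of_mem _ (ih h)

lemma take_indexOf_not_mem (a : ℕ) (l : List ℕ) : a ∉ l.take (l.idxOf a) := by
  induction l with
  | nil => simp
  | cons b t ih =>
    by_cases hb : b = a
    · simp [List.idxOf_cons_eq _ hb]
    · rw [List.idxOf_cons_ne _ hb, List.take_succ_cons]
      simp only [List.mem_cons, not_or]
      exact ⟨fun h => hb h.symm, ih⟩

lemma indexOf_replicate_two (k : ℕ) (l : List ℕ) :
    List.idxOf 2 (List.replicate k 1 ++ 2 :: l) = k := by
  induction k with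
  | zero => simp
  | succ k ih =>
    rw [List.replicate_succ, List.cons_append, List.idxOf_cons_ne _ (by norm_num), ih]

lemma get_zero_of_eq_cons {l : List ℕ} {a : ℕ} {r : List ℕ} (h : l = a :: r)
    (hl : 0 < l.length) : l.get ⟨0, hl⟩ = a := by subst h; rfl

lemma avoids_pattern {p : List ℕ} (h1 : ∀ a ∈ p, 1 ≤ a) (h2 : ∀ a ∈ p, a ≤ 2) :
    Avoids p [1, 2, 1, 2, 3] := by
  rintro ⟨f, -, hiso⟩
  set i0 : Fin ([1, 2, 1, 2, 3] : List ℕ).length := ⟨0, by simp⟩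
  set i1 : Fin ([1, 2, 1, 2, 3] : List ℕ).length := ⟨1, by simp⟩
  set i4 : Fin ([1, 2, 1, 2, 3] : List ℕ).length := ⟨4, by simp⟩
  have h01 : p.get (f i0) < p.get (f i1) := (hiso i0 i1).1 (by decide)
  have h14 : p.get (f i1) < p.get (f i4) := (hiso i1 i4).1 (by decide)
  have a0 : 1 ≤ p.get (f i0) := h1 _ (p.get_mem _)
  have a4 : p.get (f i4) ≤ 2 := h2 _ (p.get_mem _)
  omega

def boolToN (x : Bool) : ℕ := cond x 2 1

def gL (t : ℕ) (b : List Bool) : List ℕ :=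
  List.replicate (t - 1) 1 ++ 2 :: b.map boolToN

lemma ncard_length_eq (m : ℕ) : {l : List Bool | l.length = m}.ncard = 2 ^ m := by
  rw [← Nat.card_coe_set_eq]
  have e : {l : List Bool | l.length = m} ≃ List.Vector Bool m :=
    Equiv.subtypeEquivRight fun _ => Iff.rfl
  rw [Nat.card_congr e, Nat.card_eq_fintype_card, card_vector, Fintype.card_bool]


/-- For `n ≥ 2` and `2 ≤ t ≤ n`, `a_{n,t,1} = 2^{n-t}`. -/
theorem aRGF_s_eq_one (n t : ℕ) (hn : 2 ≤ n) (ht : 2 ≤ t) (htn : t ≤ n) :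
    aRGF n t 1 = 2 ^ (n - t) := by
  have hset : {p : List ℕ | p.length = n ∧ IsRGF p ∧ Avoids p [1, 2, 1, 2, 3] ∧
      2 ≤ p.toFinset.card ∧
      p.idxOf (maxLetter p) + 1 = t ∧ p.idxOf (maxLetter p - 1) + 1 = 1}
      = gL t '' {b : List Bool | b.length = n - t} := by
    ext p
    constructor
    · rintro ⟨hlen, ⟨hget0, hge1, -⟩, -, hcard, hmaxIdx, hsndIdx⟩
      have hlenpos : 0 < p.length := by omega
      have hM1 : maxLetter p - 1 = 1 := by
        cases p with
        | nil => simp at hlenpos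
        | cons a l =>
          have ha : a = 1 := hget0 hlenpos
          by_cases h : a = maxLetter (a :: l) - 1
          · omega
          · rw [List.idxOf_cons_ne _ h] at hsndIdx
            omega
      have hMne1 : maxLetter p ≠ 1 := by
        intro hM
        have hall : ∀ a ∈ p, a = 1 := by
          intro a ha
          have h1 := hge1 a ha
          have h2 : a ≤ maxLetter p := le_foldr_max ha
          omega
        have hsub : p.toFinset ⊆ {1} := by
          intro a ha
          simp only [Finset.mem_singleton]
          exact hall a (List.mem_toFinset.1 ha)
        have := Finset.card_le_card hsub
        simp at this
        omega
      have hM : maxLetter p = 2 := by omega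
      have hle2 : ∀ a ∈ p, a ≤ 2 := by
        intro a ha
        have h2 : a ≤ maxLetter p := le_foldr_max ha
        omega
      have h2mem : (2 : ℕ) ∈ p := by
        rw [← hM]
        exact foldr_max_mem (by show 0 < maxLetter p; omega)
      have hk : p.idxOf 2 + 1 = t := by rw [← hM]; exact hmaxIdx
      set k := p.idxOf 2 with hkdef
      have hlt2 : k < p.length := List.idxOf_lt_length_iff.2 h2mem
      have hpt : p[k]'hlt2 = 2 := List.getElem_idxOf hlt2
      have htake : p.take k = List.replicate k 1 := by
        rw [List.eq_replicate_iff]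
        refine ⟨by rw [List.length_take]; omega, ?_⟩
        intro a ha
        have hap : a ∈ p := List.mem_of_mem_take ha
        have h1 := hge1 a hap
        have h2 := hle2 a hap
        have hne2 : a ≠ 2 := by
          intro h
          subst h
          exact take_indexOf_not_mem 2 p ha
        omega
      have hsplit : p = p.take k ++ 2 :: p.drop (k + 1) := by
        have h1 : p.take (k + 1) = p.take k ++ [2] := by
          rw [List.take_succ]
          congr 1
          rw [List.getElem?_eq_getElem hlt2, hpt]
          rfl
        calc p = p.take (k + 1) ++ p.drop (k + 1) := (List.take_append_drop _ p).symm
        _ = p.take k ++ 2 :: p.drop (k + 1) := by rw [h1, List.append_assoc]; rfl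
      refine ⟨(p.drop (k + 1)).map (fun a => a == 2), by simp [hlen]; omega, ?_⟩
      have hmapback : ((p.drop (k + 1)).map (fun a => a == 2)).map boolToN
          = p.drop (k + 1) := by
        rw [List.map_map]
        have hcg : ∀ a ∈ p.drop (k + 1), (boolToN ∘ fun a => a == 2) a = id a := by
          intro a ha
          have hap : a ∈ p := List.mem_of_mem_drop ha
          have h1 := hge1 a hap
          have h2 := hle2 a hap
          simp only [Function.comp_apply, id_eq, boolToN]
          by_cases h : a = 2
          · simp [h]
          · have : a = 1 := by omega
            simp [this]
        rw [List.map_congr_left hcg, List.map_id]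
      have hteq : t - 1 = k := by omega
      rw [gL, hmapback, hteq, ← htake, ← hsplit]
    · rintro ⟨b, hb, rfl⟩
      simp only [Set.mem_setOf_eq] at hb
      have hcons : gL t b = 1 :: (List.replicate (t - 2) 1 ++ 2 :: b.map boolToN) := by
        rw [gL]
        have : t - 1 = (t - 2) + 1 := by omega
        rw [this, List.replicate_succ, List.cons_append]
      have hge1 : ∀ a ∈ gL t b, 1 ≤ a := by
        intro a ha
        rw [gL] at ha
        rcases List.mem_append.1 ha with h | h
        · rw [List.eq_of_mem_replicate h]
        · rcases List.mem_cons.1 h with h | h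
          · omega
          · obtain ⟨x, -, rfl⟩ := List.mem_map.1 h
            cases x <;> simp [boolToN]
      have hle2 : ∀ a ∈ gL t b, a ≤ 2 := by
        intro a ha
        rw [gL] at ha
        rcases List.mem_append.1 ha with h | h
        · rw [List.eq_of_mem_replicate h]; omega
        · rcases List.mem_cons.1 h with h | h
          · omega
          · obtain ⟨x, -, rfl⟩ := List.mem_map.1 h
            cases x <;> simp [boolToN]
      have h2mem : (2 : ℕ) ∈ gL t b := by
        rw [gL]; exact List.mem_append_right _ (List.mem_cons_self)
      have h1mem : (1 : ℕ) ∈ gL t b := by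
        rw [hcons]; exact List.mem_cons_self
      have hM : maxLetter (gL t b) = 2 :=
        le_antisymm (foldr_max_le hle2) (le_foldr_max h2mem)
      have hlen : (gL t b).length = n := by
        rw [gL]; simp [hb]; omega
      refine ⟨hlen, ⟨?_, hge1, ?_⟩, avoids_pattern hge1 hle2, ?_, ?_, ?_⟩
      · intro h
        exact get_zero_of_eq_cons hcons h
      · intro i hi
        have hgle : (gL t b).get i ≤ 2 := hle2 _ (List.get_mem _ _)
        have h1take : (1 : ℕ) ∈ (gL t b).take i := by
          obtain ⟨k, hk⟩ : ∃ k, (i : ℕ) = k + 1 := ⟨(i : ℕ) - 1, by omega⟩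
          rw [hk, hcons, List.take_succ_cons]
          exact List.mem_cons_self
        have := le_foldr_max h1take
        omega
      · have hsub : ({1, 2} : Finset ℕ) ⊆ (gL t b).toFinset := by
          intro x hx
          simp only [Finset.mem_insert, Finset.mem_singleton] at hx
          rcases hx with rfl | rfl
          · exact List.mem_toFinset.2 h1mem
          · exact List.mem_toFinset.2 h2mem
        have := Finset.card_le_card hsub
        simpa using this
      · rw [hM, gL, indexOf_replicate_two]
        omega
      · rw [hM]
        norm_num
        rw [hcons, List.idxOf_cons_self]
  rw [aRGF, hset, Set.ncard_image_of_injOn, ncard_length_eq]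
  intro b1 _ b2 _ heq
  rw [gL, gL] at heq
  have h1 := List.append_cancel_left heq
  have h2 : b1.map boolToN = b2.map boolToN := by
    injection h1
  have hinj : Function.Injective boolToN := by
    intro x y hxy
    cases x <;> cases y <;> simp [boolToN] at hxy ⊢
  exact List.map_injective_iff.2 hinj h2
end
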